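/- Allocation-nudge: Let M be a menu where a buyer with valuation v selects (S(v), p(v)). Let M' be obtained by replacing each option (S(v), p(v)) with (S'(v), (1-ε)p(v)) where v'(S(v)) ≥ v'(S'(v)) for all v' in the support of D. Then Rev_{M'}(D) ≥ (1-ε)·Rev_M(D) - E[v(S(v)) - v(S'(v))]/ε. -/
import Mathlib


open scoped BigOperators

/-- A valuation: a set function on the `n` items. -/
abbrev Val (n : ℕ) := Finset (Fin n) → ℝ

/-- A randomized allocation: a distribution over sets of items. -/
abbrev RandAlloc (n : ℕ) := PMF (Finset (Fin n))

/-- Expected value of a randomized allocation under valuation `v`. -/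
noncomputable def vEval {n : ℕ} (v : Val n) (A : RandAlloc n) : ℝ :=
  ∑' S, (A S).toReal * v S

/-- Expectation of `f` under a discrete distribution `π`. -/
noncomputable def Exp {α : Type*} (π : PMF α) (f : α → ℝ) : ℝ :=
  ∑' a, (π a).toReal * f a

/-- A menu contains the free empty option and charges nonnegative prices. -/
def IsMenu {n : ℕ} (M : Set (RandAlloc n × ℝ)) : Prop :=
  (PMF.pure ∅, (0 : ℝ)) ∈ M ∧ ∀ o ∈ M, 0 ≤ o.2

/-- `c` is a utility-maximizing purchase rule for menu `M`. -/
def IsOptChoice {n : ℕ} (M : Set (RandAlloc n × ℝ))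
    (c : Val n → RandAlloc n × ℝ) : Prop :=
  (∀ v, c v ∈ M) ∧ ∀ v, ∀ o ∈ M, vEval v o.1 - o.2 ≤ vEval v (c v).1 - (c v).2

/-- Expected revenue of purchase rule `c` on distribution `D`. -/
noncomputable def RevM {n : ℕ} (c : Val n → RandAlloc n × ℝ) (D : PMF (Val n)) : ℝ :=
  ∑' v, (D v).toReal * (c v).2

lemma pmf_tsum_eq_sum {n : ℕ} (D : PMF (Val n)) (hD : D.support.Finite)
    (f : Val n → ℝ) :
    ∑' v, (D v).toReal * f v = ∑ v ∈ hD.toFinset, (D v).toReal * f v := by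
  apply tsum_eq_sum
  intro b hb
  have : D b = 0 := by
    by_contra h
    exact hb (hD.mem_toFinset.2 h)
  simp [this]

/-- Allocation-nudge: replacing each purchased option `(S(v), p(v))` of `M` by a
weakly worse allocation `(S'(v), (1-ε)·p(v))` yields a menu `M'` with
`Rev_{M'}(D) ≥ (1-ε)·Rev_M(D) - E[v(S(v)) - v(S'(v))]/ε`. -/
theorem stmt4 {n : ℕ} (D : PMF (Val n)) (hD : D.support.Finite)
    (hne : D.support.Nonempty)
    (M : Set (RandAlloc n × ℝ)) (hM : IsMenu M)
    (ε : ℝ) (hε0 : 0 < ε) (hε1 : ε < 1)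
    (c : Val n → RandAlloc n × ℝ) (hc : IsOptChoice M c)
    (S' : Val n → RandAlloc n)
    (hworse : ∀ v : Val n, ∀ v' ∈ D.support, vEval v' (S' v) ≤ vEval v' (c v).1)
    (c' : Val n → RandAlloc n × ℝ)
    (hc' : IsOptChoice {o | ∃ v ∈ D.support, o = (S' v, (1 - ε) * (c v).2)} c') :
    (1 - ε) * RevM c D - Exp D (fun v => vEval v (c v).1 - vEval v (S' v)) / ε
      ≤ RevM c' D := by
  have key : ∀ v ∈ D.support,
      (1 - ε) * (c v).2 - (vEval v (c v).1 - vEval v (S' v)) / ε ≤ (c' v).2 := by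
    intro v hv
    obtain ⟨w, hw, hcw⟩ := hc'.1 v
    have hopt := hc'.2 v (S' v, (1 - ε) * (c v).2) ⟨v, hv, rfl⟩
    rw [hcw] at hopt
    simp only at hopt
    have hIC := hc.2 v (c w) (hc.1 w)
    have hBw := hworse w v hv
    have hB := hworse v v hv
    have hq : (c' v).2 = (1 - ε) * (c w).2 := by rw [hcw]
    rw [hq]
    set X := vEval v (c v).1 - vEval v (S' v) with hX
    have hd : (c v).2 - (c w).2 ≤ X / ε := by
      rw [le_div_iff₀ hε0]; nlinarith [hopt, hIC, hBw]
    have hX0 : (0:ℝ) ≤ X / ε := div_nonneg (by linarith [hB]) hε0.le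
    nlinarith [mul_le_mul_of_nonneg_left hd (show (0:ℝ) ≤ 1 - ε by linarith),
      mul_nonneg hε0.le hX0]
  rw [RevM, RevM, Exp, pmf_tsum_eq_sum D hD, pmf_tsum_eq_sum D hD, pmf_tsum_eq_sum D hD,
    Finset.mul_sum, Finset.sum_div, ← Finset.sum_sub_distrib]
  apply Finset.sum_le_sum
  intro v hv
  have hv' : v ∈ D.support := hD.mem_toFinset.1 hv
  have hd : (0:ℝ) ≤ (D v).toReal := ENNReal.toReal_nonneg
  have := key v hv'
  calc (1 - ε) * ((D v).toReal * (c v).2) - (D v).toReal * (vEval v (c v).1 - vEval v (S' v)) / ε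
      = (D v).toReal * ((1 - ε) * (c v).2 - (vEval v (c v).1 - vEval v (S' v)) / ε) := by ring
    _ ≤ (D v).toReal * (c' v).2 := by exact mul_le_mul_of_nonneg_left this hd
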